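/- For every integer k with 0 ≤ k ≤ n, one has θ_1^{n−k} ∧ θ_2^{n−k} ∧ λ^{2k} = (−1)^k (2k)! ((n−k)!)² · binom(n, k) · Ω in Λ^{4n}(U ⊗ W). (This computes the intersection numbers θ_1^{n−k} θ_2^{n−k} λ^{2k} on A × A for a very general principally polarized abelian variety A of dimension n.) -/

import Mathlib

open scoped TensorProduct

set_option synthInstance.maxHeartbeats 1000000
set_option maxHeartbeats 1000000

noncomputable section

/-- `U n = ℝ^{2n}`, with basis `e_s = Pi.single (Sum.inl s) 1` (for `1 ≤ s ≤ n`) and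
`f_s = Pi.single (Sum.inr s) 1`. -/
abbrev U (n : ℕ) : Type := (Fin n ⊕ Fin n) → ℝ

/-- `W e = ℝ^e` with its standard basis `w_1, …, w_e`. -/
abbrev W (e : ℕ) : Type := Fin e → ℝ

/-- `V = U ⊗ W`. -/
abbrev V (n e : ℕ) : Type := U n ⊗[ℝ] W e

/-- The exterior algebra `Λ(U ⊗ W)`. -/
abbrev EA (n e : ℕ) : Type := ExteriorAlgebra ℝ (V n e)

/-- The standard symplectic form on `U = ℝ^{2n}`: `ω(e_s, f_t) = δ_{st}`,
`ω(e_s, e_t) = ω(f_s, f_t) = 0`. -/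
def omegaForm (n : ℕ) (x y : U n) : ℝ :=
  ∑ s : Fin n, (x (Sum.inl s) * y (Sum.inr s) - x (Sum.inr s) * y (Sum.inl s))

/-- The symplectic group `Sp(2n, ℝ)`: linear automorphisms of `U` preserving `ω`. -/
def Sp (n : ℕ) : Set (U n ≃ₗ[ℝ] U n) :=
  {g | ∀ x y : U n, omegaForm n (g x) (g y) = omegaForm n x y}

/-- The basis vector `e_s` of `U`. -/
def eU (n : ℕ) (s : Fin n) : U n := Pi.single (Sum.inl s) 1

/-- The basis vector `f_s` of `U`. -/
def fU (n : ℕ) (s : Fin n) : U n := Pi.single (Sum.inr s) 1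

/-- The basis vector `w_i` of `W`. -/
def wW (e : ℕ) (i : Fin e) : W e := Pi.single i 1

/-- The element `e_s ⊗ w_i`, viewed in the exterior algebra. -/
def EV (n e : ℕ) (s : Fin n) (i : Fin e) : EA n e :=
  ExteriorAlgebra.ι ℝ (eU n s ⊗ₜ[ℝ] wW e i)

/-- The element `f_s ⊗ w_i`, viewed in the exterior algebra. -/
def FV (n e : ℕ) (s : Fin n) (i : Fin e) : EA n e :=
  ExteriorAlgebra.ι ℝ (fU n s ⊗ₜ[ℝ] wW e i)

/-- `θ_i = Σ_s (e_s ⊗ w_i) ∧ (f_s ⊗ w_i)`. -/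
def theta (n e : ℕ) (i : Fin e) : EA n e := ∑ s : Fin n, EV n e s i * FV n e s i

/-- `λ_{jk} = Σ_s ((e_s ⊗ w_j) ∧ (f_s ⊗ w_k) + (e_s ⊗ w_k) ∧ (f_s ⊗ w_j))`. -/
def lam (n e : ℕ) (j k : Fin e) : EA n e :=
  ∑ s : Fin n, (EV n e s j * FV n e s k + EV n e s k * FV n e s j)

/-- The algebra automorphism of `Λ(U ⊗ W)` induced by `g ⊗ id_W`, for `g ∈ Sp(2n, ℝ)`. -/
def spAct (n e : ℕ) (g : U n ≃ₗ[ℝ] U n) : EA n e →ₐ[ℝ] EA n e :=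
  ExteriorAlgebra.map (TensorProduct.map g.toLinearMap LinearMap.id)

/-- The set `R` of elements of `Λ(U ⊗ W)` fixed by all `g ∈ Sp(2n, ℝ)`. -/
def Rset (n e : ℕ) : Set (EA n e) := {x | ∀ g ∈ Sp n, spAct n e g x = x}

/-- The submodule of `Sp(2n, ℝ)`-invariant elements of `Λ(U ⊗ W)`. -/
def fixedSubmodule (n e : ℕ) : Submodule ℝ (EA n e) :=
  ⨅ g ∈ Sp n, LinearMap.eqLocus (spAct n e g).toLinearMap (LinearMap.id)

/-- `R_d = R ∩ Λ^d(U ⊗ W)`, as a real vector space. -/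
def Rd (n e d : ℕ) : Submodule ℝ (EA n e) :=
  fixedSubmodule n e ⊓ ⋀[ℝ]^d (V n e)

/-- The algebra endomorphism of `Λ(U ⊗ W)` induced by `id_U ⊗ g`, where an `e × e` real
matrix `g` acts on `W` by sending `w_i` to `Σ_j g_{ji} w_j`. -/
def glAct (n e : ℕ) (g : Matrix (Fin e) (Fin e) ℝ) : EA n e →ₐ[ℝ] EA n e :=
  ExteriorAlgebra.map (TensorProduct.map LinearMap.id g.mulVecLin)

/-- The top form `Ω = (e_1⊗w_1) ∧ (f_1⊗w_1) ∧ ⋯ ∧ (e_n⊗w_1) ∧ (f_n⊗w_1) ∧ (e_1⊗w_2) ∧ ⋯ ∧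
(f_n⊗w_2)` in `Λ^{4n}(U ⊗ W)` (here `e = 2`). -/
def OmegaTop (n : ℕ) : EA n 2 :=
  (List.ofFn fun s : Fin n => EV n 2 s 0 * FV n 2 s 0).prod *
    (List.ofFn fun s : Fin n => EV n 2 s 1 * FV n 2 s 1).prod

/- ================= auxiliary development (generic part) ================= -/

section ExtLemmas

open ExteriorAlgebra

variable {R M : Type*} [CommRing R] [AddCommGroup M] [Module R M]

lemma S9anti (x y : M) : ι R x * ι R y = -(ι R y * ι R x) :=
  eq_neg_of_add_eq_zero_left (ι_add_mul_swap x y)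

lemma S9comm22 (x y z w : M) : Commute (ι R x * ι R y) (ι R z * ι R w) := by
  have sp : ∀ a b c : M, (ι R a * ι R b) * ι R c = ι R c * (ι R a * ι R b) := fun a b c => by
    rw [mul_assoc, S9anti b c, mul_neg, ← mul_assoc, S9anti a c, neg_mul, neg_neg, mul_assoc]
  show _ = _
  rw [mul_assoc, ← sp z w y, ← mul_assoc, ← sp z w x, mul_assoc]

lemma S9L1 (x y z : M) : (ι R x * ι R y) * (ι R x * ι R z) = 0 := by
  have h : ι R y * (ι R x * ι R z) = -(ι R x * (ι R y * ι R z)) := by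
    rw [← mul_assoc, S9anti y x, neg_mul, mul_assoc]
  rw [mul_assoc, h, mul_neg, ← mul_assoc, ι_sq_zero, zero_mul, neg_zero]

lemma S9L2 (x y z : M) : (ι R x * ι R y) * (ι R z * ι R y) = 0 := by
  have h : ι R y * (ι R z * ι R y) = 0 := by
    rw [← mul_assoc, S9anti y z, neg_mul, mul_assoc, ι_sq_zero, mul_zero, neg_zero]
  rw [mul_assoc, h, mul_zero]

lemma S9Lswap (x y z w : M) :
    (ι R x * ι R y) * (ι R z * ι R w) = -((ι R x * ι R w) * (ι R z * ι R y)) := by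
  have key : ι R y * (ι R z * ι R w) = -(ι R w * (ι R z * ι R y)) := by
    rw [S9anti z w, mul_neg, ← mul_assoc, S9anti y w, neg_mul, neg_neg, mul_assoc,
      S9anti y z, mul_neg]
  simp only [mul_assoc]
  rw [key, mul_neg]

lemma S9ccgen (e0 f0 e1 f1 : M) :
    (ι R e0 * ι R f1 + ι R e1 * ι R f0) * (ι R e0 * ι R f1 + ι R e1 * ι R f0)
      = -((ι R e0 * ι R f0) * (ι R e1 * ι R f1) + (ι R e0 * ι R f0) * (ι R e1 * ι R f1)) := by
  rw [add_mul, mul_add, mul_add, S9L1, S9L1, S9Lswap e0 f1 e1 f0, S9Lswap e1 f0 e0 f1,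
    (S9comm22 e1 f1 e0 f0).eq]
  abel

end ExtLemmas

namespace S9G

variable {R : Type*} [CommRing R]

/-- binomial expansion when the second term squares to zero -/
lemma binom2 (x y : R) (h : y * y = 0) (p : ℕ) :
    (x + y) ^ p = x ^ p + (p : R) * x ^ (p - 1) * y := by
  induction p with
  | zero => simp
  | succ p ih =>
    match p, ih with
    | 0, _ => simp
    | (p' + 1), ih =>
      rw [pow_succ, ih]
      simp only [Nat.add_sub_cancel]
      push_cast
      linear_combination ((p' : R) + 1) * x ^ p' * h

/-- binomial expansion when the second term cubes to zero -/
lemma binom3 (x y : R) (h : y * y * y = 0) (p : ℕ) :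
    (x + y) ^ p = x ^ p + (p : R) * x ^ (p - 1) * y
      + ((p.choose 2 : ℕ) : R) * (x ^ (p - 2) * (y * y)) := by
  induction p with
  | zero => simp
  | succ p ih =>
    match p, ih with
    | 0, _ => norm_num
    | 1, _ => norm_num; ring
    | (p' + 2), ih =>
      rw [pow_succ, ih]
      simp only [Nat.add_sub_cancel, show p' + 2 - 1 = p' + 1 from rfl,
        show p' + 3 - 2 = p' + 1 from rfl, show p' + 2 - 2 = p' from rfl,
        show p' + 3 - 1 = p' + 2 from rfl]
      have hch : (((p' + 3).choose 2 : ℕ) : R) = (((p' + 2).choose 2 : ℕ) : R) + (p' + 2 : ℕ) := by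
        rw [show p' + 3 = (p' + 2) + 1 from rfl, Nat.choose_succ_succ, Nat.choose_one_right]
        push_cast; ring
      rw [hch]
      push_cast
      linear_combination (((p' + 2).choose 2 : ℕ) : R) * x ^ p' * h

/-- partial sums -/
def GA (a : ℕ → R) (m : ℕ) : R := ∑ j ∈ Finset.range m, a j

/-- partial products -/
def GOm (a b : ℕ → R) (m : ℕ) : R := ∏ j ∈ Finset.range m, (a j * b j)

lemma GA_succ (a : ℕ → R) (m : ℕ) : GA a (m + 1) = GA a m + a m := Finset.sum_range_succ _ _

lemma GOm_succ (a b : ℕ → R) (m : ℕ) : GOm a b (m + 1) = GOm a b m * (a m * b m) :=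
  Finset.prod_range_succ _ _

/-- vanishing in overly high degree -/
lemma van (a b c : ℕ → R)
    (raa : ∀ j, a j * a j = 0) (rbb : ∀ j, b j * b j = 0)
    (rac : ∀ j, a j * c j = 0) (rbc : ∀ j, b j * c j = 0)
    (rcc : ∀ j, c j * c j = -(a j * b j + a j * b j)) :
    ∀ m p q r : ℕ, 2 * m < p + q + r → GA a m ^ p * GA b m ^ q * GA c m ^ r = 0 := by
  have rccc : ∀ j, c j * c j * c j = 0 := fun j => by
    linear_combination (c j) * rcc j + (-2 * b j) * rac j
  intro m
  induction m with
  | zero =>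
    intro p q r h
    have h' : p ≠ 0 ∨ q ≠ 0 ∨ r ≠ 0 := by omega
    rcases h' with h' | h' | h' <;>
      simp [GA, zero_pow h']
  | succ m ih =>
    intro p q r h
    have h1 := ih p q r (by omega)
    have h2 := ih p q (r - 1) (by omega)
    have h3 := ih p q (r - 2) (by omega)
    have h4 := ih p (q - 1) r (by omega)
    have h5 := ih p (q - 1) (r - 1) (by omega)
    have h7 := ih (p - 1) q r (by omega)
    have h8 := ih (p - 1) q (r - 1) (by omega)
    have h10 := ih (p - 1) (q - 1) r (by omega)
    rw [GA_succ, GA_succ, GA_succ, binom2 _ _ (raa m) p, binom2 _ _ (rbb m) q,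
      binom3 _ _ (rccc m) r]
    set A := GA a m; set B := GA b m; set C := GA c m
    set α := ((p : ℕ) : R); set β := ((q : ℕ) : R)
    set γ := ((r : ℕ) : R); set χ := ((r.choose 2 : ℕ) : R)
    linear_combination h1 + (γ * c m) * h2 + (χ * c m * c m) * h3 + (β * b m) * h4
      + (β * γ * b m * c m) * h5 + (α * a m) * h7 + (α * γ * a m * c m) * h8
      + (α * β * a m * b m) * h10
      + (β * χ * A ^ p * B ^ (q - 1) * C ^ (r - 2) * c m) * rbc m
      + (α * χ * A ^ (p - 1) * B ^ q * C ^ (r - 2) * c m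
          + α * β * γ * A ^ (p - 1) * B ^ (q - 1) * C ^ (r - 1) * b m
          + α * β * χ * A ^ (p - 1) * B ^ (q - 1) * C ^ (r - 2) * b m * c m) * rac m

/-- the integer coefficient -/
def zc (M k : ℕ) : ℤ :=
  (-1) ^ k * ((2 * k).factorial : ℤ) * (M.factorial : ℤ) ^ 2 * (((M + k).choose k : ℕ) : ℤ)

lemma choose2 (K : ℕ) : (((2 * K + 2).choose 2 : ℕ) : ℤ) = ((K : ℤ) + 1) * (2 * K + 1) := by
  have h : (2 * K + 2).choose 2 = (K + 1) * (2 * K + 1) := by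
    rw [Nat.choose_two_right]
    have h1 : 2 * K + 2 - 1 = 2 * K + 1 := by omega
    rw [h1, show (2 * K + 2) * (2 * K + 1) = 2 * ((K + 1) * (2 * K + 1)) by ring,
      Nat.mul_div_cancel_left _ (by norm_num)]
  rw [h]; push_cast; ring

lemma zc_rec0 (M : ℕ) : zc (M + 1) 0 = ((M : ℤ) + 1) ^ 2 * zc M 0 := by
  simp only [zc, Nat.add_zero, Nat.choose_zero_right, Nat.factorial_succ]
  push_cast; ring

lemma zc_recC (K : ℕ) : zc 0 (K + 1) = -2 * ((K : ℤ) + 1) * (2 * K + 1) * zc 0 K := by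
  simp only [zc, Nat.zero_add, Nat.choose_self]
  have h1 : 2 * (K + 1) = (2 * K + 1) + 1 := by ring
  rw [h1, Nat.factorial_succ, Nat.factorial_succ]
  push_cast; ring

lemma zc_rec (M K : ℕ) :
    zc (M + 1) (K + 1)
      = ((M : ℤ) + 1) ^ 2 * zc M (K + 1) - 2 * ((K : ℤ) + 1) * (2 * K + 1) * zc (M + 1) K := by
  simp only [zc]
  have h1 : 2 * (K + 1) = (2 * K + 1) + 1 := by ring
  have h2 : (M + 1) + (K + 1) = (M + (K + 1)) + 1 := by ring
  have h3 : (M + (K + 1)) = (M + 1) + K := by ring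
  rw [h1, Nat.factorial_succ, Nat.factorial_succ, Nat.factorial_succ (M),
    h2, Nat.choose_succ_succ, h3]
  push_cast; ring

/-- the main computation -/
lemma main (a b c : ℕ → R)
    (raa : ∀ j, a j * a j = 0) (rbb : ∀ j, b j * b j = 0)
    (rac : ∀ j, a j * c j = 0) (rbc : ∀ j, b j * c j = 0)
    (rcc : ∀ j, c j * c j = -(a j * b j + a j * b j)) :
    ∀ m M k : ℕ, M + k = m →
      GA a m ^ M * GA b m ^ M * GA c m ^ (2 * k) = ((zc M k : ℤ) : R) * GOm a b m := by
  have rccc : ∀ j, c j * c j * c j = 0 := fun j => by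
    linear_combination (c j) * rcc j + (-2 * b j) * rac j
  have cast2 : ∀ K : ℕ, (((2 * K + 2).choose 2 : ℕ) : R) = ((K : R) + 1) * (2 * (K : R) + 1) := by
    intro K
    have h := congrArg (Int.cast : ℤ → R) (choose2 K)
    push_cast at h ⊢
    linear_combination h
  intro m
  induction m with
  | zero =>
    intro M k hMk
    have hM : M = 0 := by omega
    have hk : k = 0 := by omega
    subst hM hk
    norm_num [zc, GOm]
  | succ m ih =>
    intro M k hMk
    rw [GA_succ, GA_succ, GA_succ, GOm_succ, binom2 _ _ (raa m) M,
      binom2 _ _ (rbb m) M, binom3 _ _ (rccc m) (2 * k)]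
    set A := GA a m; set B := GA b m; set C := GA c m
    rcases M with _ | M' <;> rcases k with _ | K
    · omega
    · -- M = 0, k = K + 1, so m = K
      have hm : K = m := by omega
      subst hm
      have ihC := ih 0 K (by omega)
      have v1 := van a b c raa rbb rac rbc rcc K 0 0 (2 * (K + 1)) (by omega)
      have v2 := van a b c raa rbb rac rbc rcc K 0 0 (2 * K + 1) (by omega)
      have hz : ((zc 0 (K + 1) : ℤ) : R)
          = -2 * (((2 * K + 2).choose 2 : ℕ) : R) * ((zc 0 K : ℤ) : R) := by
        have h := congrArg (Int.cast : ℤ → R) (zc_recC K)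
        push_cast at h ⊢
        rw [cast2 K]
        push_cast
        linear_combination h
      have he1 : 2 * (K + 1) - 1 = 2 * K + 1 := by omega
      have he2 : 2 * (K + 1) - 2 = 2 * K := by omega
      have he3 : 2 * (K + 1) = 2 * K + 2 := by omega
      rw [he1, he2, he3] at *
      set χ := (((2 * K + 2).choose 2 : ℕ) : R) with hχ
      linear_combination v1 + (((2 * K + 2 : ℕ) : R) * c K) * v2
        + (χ * C ^ (2 * K)) * rcc K + (-2 * χ * a K * b K) * ihC
        - (GOm a b K * (a K * b K)) * hz
    · -- M = M' + 1, k = 0, so m = M'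
      have hm : M' = m := by omega
      subst hm
      have ihM := ih M' 0 (by omega)
      have v1 := van a b c raa rbb rac rbc rcc M' (M' + 1) (M' + 1) 0 (by omega)
      have v2 := van a b c raa rbb rac rbc rcc M' (M' + 1) M' 0 (by omega)
      have v3 := van a b c raa rbb rac rbc rcc M' M' (M' + 1) 0 (by omega)
      have hz : ((zc (M' + 1) 0 : ℤ) : R)
          = ((M' : R) + 1) ^ 2 * ((zc M' 0 : ℤ) : R) := by
        have h := congrArg (Int.cast : ℤ → R) (zc_rec0 M')
        push_cast at h ⊢
        linear_combination h
      simp only [Nat.mul_zero, pow_zero, Nat.add_sub_cancel, Nat.cast_add, Nat.cast_one,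
        Nat.cast_zero, Nat.choose_zero_succ, mul_one, zero_mul, mul_zero, add_zero] at *
      linear_combination v1 + ((M' : R) + 1) * (b M') * v2 + ((M' : R) + 1) * (a M') * v3
        + (((M' : R) + 1) ^ 2 * a M' * b M') * ihM - (GOm a b M' * (a M' * b M')) * hz
    · -- M = M' + 1, k = K + 1
      have ihA := ih M' (K + 1) (by omega)
      have ihC := ih (M' + 1) K (by omega)
      have v1 := van a b c raa rbb rac rbc rcc m (M' + 1) (M' + 1) (2 * (K + 1)) (by omega)
      have v2 := van a b c raa rbb rac rbc rcc m (M' + 1) (M' + 1) (2 * K + 1) (by omega)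
      have v3 := van a b c raa rbb rac rbc rcc m M' (M' + 1) (2 * (K + 1)) (by omega)
      have v4 := van a b c raa rbb rac rbc rcc m (M' + 1) M' (2 * (K + 1)) (by omega)
      have hz : ((zc (M' + 1) (K + 1) : ℤ) : R)
          = ((M' : R) + 1) ^ 2 * ((zc M' (K + 1) : ℤ) : R)
            - 2 * (((2 * K + 2).choose 2 : ℕ) : R) * ((zc (M' + 1) K : ℤ) : R) := by
        have h := congrArg (Int.cast : ℤ → R) (zc_rec M' K)
        push_cast at h ⊢
        rw [cast2 K]
        push_cast
        linear_combination h
      have he1 : 2 * (K + 1) - 1 = 2 * K + 1 := by omega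
      have he2 : 2 * (K + 1) - 2 = 2 * K := by omega
      have he3 : 2 * (K + 1) = 2 * K + 2 := by omega
      have he4 : M' + 1 - 1 = M' := by omega
      rw [he1, he2, he3, he4] at *
      set χ := (((2 * K + 2).choose 2 : ℕ) : R) with hχ
      set α := ((M' + 1 : ℕ) : R) with hα
      have hα2 : α = (M' : R) + 1 := by rw [hα]; push_cast; ring
      linear_combination v1 + (((2 * K + 2 : ℕ) : R) * c m) * v2 + (α * a m) * v3
        + (α * b m) * v4
        + (χ * A ^ (M' + 1) * B ^ (M' + 1) * C ^ (2 * K)) * rcc m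
        + (-2 * χ * a m * b m) * ihC + (α ^ 2 * a m * b m) * ihA
        + (α * ((2 * K + 2 : ℕ) : R) * A ^ (M' + 1) * B ^ M' * C ^ (2 * K + 1)) * rbc m
        + (α * χ * A ^ (M' + 1) * B ^ M' * C ^ (2 * K) * c m) * rbc m
        + (α * ((2 * K + 2 : ℕ) : R) * A ^ M' * B ^ (M' + 1) * C ^ (2 * K + 1)) * rac m
        + (α * χ * A ^ M' * B ^ (M' + 1) * C ^ (2 * K) * c m) * rac m
        + (α ^ 2 * ((2 * K + 2 : ℕ) : R) * A ^ M' * B ^ M' * C ^ (2 * K + 1) * b m) * rac m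
        + (α ^ 2 * χ * A ^ M' * B ^ M' * C ^ (2 * K) * b m * c m) * rac m
        - (GOm a b m * (a m * b m)) * hz
        + (a m * b m * GOm a b m * ((zc M' (K + 1) : ℤ) : R) * (α + (M' : R) + 1)) * hα2

end S9G
namespace S9

open ExteriorAlgebra

variable (n : ℕ)

/-- the (commutative) subalgebra generated by products of two generators -/
def Tsub : Subalgebra ℝ (EA n 2) :=
  Algebra.adjoin ℝ {u | ∃ x y : V n 2, u = ι ℝ x * ι ℝ y}

noncomputable instance : CommRing (Tsub n) :=
  Algebra.adjoinCommRingOfComm ℝ (by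
    rintro a ⟨x, y, rfl⟩ b ⟨z, w, rfl⟩
    exact (S9comm22 x y z w).eq)

def mk2 (x y : V n 2) : Tsub n :=
  ⟨ι ℝ x * ι ℝ y, Algebra.subset_adjoin ⟨x, y, rfl⟩⟩

def aT (j : ℕ) : Tsub n :=
  if h : j < n then mk2 n (eU n ⟨j,h⟩ ⊗ₜ wW 2 0) (fU n ⟨j,h⟩ ⊗ₜ wW 2 0) else 0

def bT (j : ℕ) : Tsub n :=
  if h : j < n then mk2 n (eU n ⟨j,h⟩ ⊗ₜ wW 2 1) (fU n ⟨j,h⟩ ⊗ₜ wW 2 1) else 0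

def cT (j : ℕ) : Tsub n :=
  if h : j < n then
    mk2 n (eU n ⟨j,h⟩ ⊗ₜ wW 2 0) (fU n ⟨j,h⟩ ⊗ₜ wW 2 1)
      + mk2 n (eU n ⟨j,h⟩ ⊗ₜ wW 2 1) (fU n ⟨j,h⟩ ⊗ₜ wW 2 0)
  else 0

lemma rels : (∀ j, aT n j * aT n j = 0) ∧ (∀ j, bT n j * bT n j = 0)
    ∧ (∀ j, aT n j * cT n j = 0) ∧ (∀ j, bT n j * cT n j = 0)
    ∧ (∀ j, cT n j * cT n j = -(aT n j * bT n j + aT n j * bT n j)) := by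
  refine ⟨fun j => ?_, fun j => ?_, fun j => ?_, fun j => ?_, fun j => ?_⟩ <;>
    simp only [aT, bT, cT] <;>
    rcases Nat.lt_or_ge j n with h | h
  · simp only [dif_pos h]; exact Subtype.ext (S9L1 _ _ _)
  · simp only [dif_neg (Nat.not_lt.2 h)]; simp
  · simp only [dif_pos h]; exact Subtype.ext (S9L1 _ _ _)
  · simp only [dif_neg (Nat.not_lt.2 h)]; simp
  · simp only [dif_pos h]
    refine Subtype.ext ?_
    show (_ * _) * ((_ * _) + (_ * _)) = (0 : EA n 2)
    rw [mul_add, S9L1, S9L2, add_zero]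
  · simp only [dif_neg (Nat.not_lt.2 h)]; simp
  · simp only [dif_pos h]
    refine Subtype.ext ?_
    show (_ * _) * ((_ * _) + (_ * _)) = (0 : EA n 2)
    rw [mul_add, S9L2, S9L1, add_zero]
  · simp only [dif_neg (Nat.not_lt.2 h)]; simp
  · simp only [dif_pos h]
    refine Subtype.ext ?_
    exact S9ccgen _ _ _ _
  · simp only [dif_neg (Nat.not_lt.2 h)]; simp

end S9
/-- For `0 ≤ k ≤ n`,
`θ_1^{n-k} ∧ θ_2^{n-k} ∧ λ^{2k} = (−1)^k (2k)! ((n−k)!)² binom(n,k) · Ω`. -/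
theorem statement9 (n : ℕ) (hn : 1 ≤ n) (k : ℕ) (hk : k ≤ n) :
    theta n 2 0 ^ (n - k) * theta n 2 1 ^ (n - k) * lam n 2 0 1 ^ (2 * k) =
      ((-1 : ℝ) ^ k * (2 * k).factorial * ((n - k).factorial : ℝ) ^ 2 * (n.choose k : ℝ)) •
        OmegaTop n := by
  obtain ⟨raa, rbb, rac, rbc, rcc⟩ := S9.rels n
  have KEY := S9G.main (S9.aT n) (S9.bT n) (S9.cT n) raa rbb rac rbc rcc n (n - k) k (by omega)
  have vm : ∀ x y : S9.Tsub n, ((x * y : S9.Tsub n) : EA n 2) = (x : EA n 2) * (y : EA n 2) :=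
    fun _ _ => rfl
  have hva : ∀ s : Fin n, ((S9.aT n s : S9.Tsub n) : EA n 2) = EV n 2 s 0 * FV n 2 s 0 := by
    intro s
    rw [S9.aT, dif_pos s.isLt]
    simp only [Fin.eta]
    rfl
  have hvb : ∀ s : Fin n, ((S9.bT n s : S9.Tsub n) : EA n 2) = EV n 2 s 1 * FV n 2 s 1 := by
    intro s
    rw [S9.bT, dif_pos s.isLt]
    simp only [Fin.eta]
    rfl
  have hvc : ∀ s : Fin n, ((S9.cT n s : S9.Tsub n) : EA n 2)
      = EV n 2 s 0 * FV n 2 s 1 + EV n 2 s 1 * FV n 2 s 0 := by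
    intro s
    rw [S9.cT, dif_pos s.isLt]
    simp only [Fin.eta]
    rfl
  have hsum : ∀ (f : ℕ → S9.Tsub n) (g : Fin n → EA n 2),
      (∀ s : Fin n, ((f s : S9.Tsub n) : EA n 2) = g s) →
      ((S9G.GA f n : S9.Tsub n) : EA n 2) = ∑ s : Fin n, g s := by
    intro f g hfg
    rw [S9G.GA]; erw [AddSubmonoidClass.coe_finset_sum]; rw [
      ← Fin.sum_univ_eq_sum_range (fun j => ((f j : S9.Tsub n) : EA n 2)) n]
    exact Finset.sum_congr rfl fun s _ => hfg s
  have hprod : ∀ (f : ℕ → S9.Tsub n) (g : Fin n → EA n 2),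
      (∀ s : Fin n, ((f s : S9.Tsub n) : EA n 2) = g s) →
      (((∏ j ∈ Finset.range n, f j : S9.Tsub n)) : EA n 2) = (List.ofFn g).prod := by
    intro f g hfg
    rw [← Fin.prod_univ_eq_prod_range (fun j => f j) n, ← Fin.prod_ofFn]
    erw [SubmonoidClass.coe_list_prod]; rw [List.map_ofFn]
    exact congrArg (fun h => (List.ofFn h).prod) (funext fun s => hfg s)
  have hA : theta n 2 0 = ((S9G.GA (S9.aT n) n : S9.Tsub n) : EA n 2) := by
    rw [theta]; exact (hsum _ _ hva).symm
  have hB : theta n 2 1 = ((S9G.GA (S9.bT n) n : S9.Tsub n) : EA n 2) := by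
    rw [theta]; exact (hsum _ _ hvb).symm
  have hC : lam n 2 0 1 = ((S9G.GA (S9.cT n) n : S9.Tsub n) : EA n 2) := by
    rw [lam]; exact (hsum _ _ hvc).symm
  have hOm : ((S9G.GOm (S9.aT n) (S9.bT n) n : S9.Tsub n) : EA n 2) = OmegaTop n := by
    rw [S9G.GOm, Finset.prod_mul_distrib]; erw [vm]; rw [hprod _ _ hva, hprod _ _ hvb, OmegaTop]
  have hz : ((-1 : ℝ) ^ k * (2 * k).factorial * ((n - k).factorial : ℝ) ^ 2 * (n.choose k : ℝ))
      = ((S9G.zc (n - k) k : ℤ) : ℝ) := by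
    rw [S9G.zc]
    have hnk : n - k + k = n := by omega
    rw [hnk]
    push_cast
    ring
  have vz : (((S9G.zc (n - k) k : ℤ) : S9.Tsub n) : EA n 2) = ((S9G.zc (n - k) k : ℤ) : EA n 2) :=
    map_intCast ((S9.Tsub n).val) _
  rw [hz, Algebra.smul_def, map_intCast, hA, hB, hC, ← Subalgebra.coe_pow, ← Subalgebra.coe_pow,
    ← Subalgebra.coe_pow, ← vm, ← vm]; erw [KEY, vm, hOm, vz]
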